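/- arXiv:2003.12495 — 2 statements merged into one kernel-verified Lean document; each statement's English description precedes it below -/
import Mathlib

section
/- Let s = m + α with m ∈ ℕ, 0 < α ≤ 1, and let X, Y be random variables with E|X|^s < ∞, E|Y|^s < ∞, and E X^k = E Y^k for k = 1, …, m. Then ζ_s(X, Y) ≤ (Γ(1 + α) / Γ(1 + s)) · (E|X|^s + E|Y|^s). -/
open MeasureTheory ProbabilityTheory Real Set Finset

noncomputable section

/-- The Zolotarev function class `F_s` for `s = m + α`: bounded, `m` times
continuously differentiable functions whose `m`-th derivative is `α`-Hölder
with constant 1. -/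
def zClass (m : ℕ) (α : ℝ) : Set (ℝ → ℝ) :=
  {f | (∃ C, ∀ x, |f x| ≤ C) ∧ ContDiff ℝ m f ∧
    ∀ x y, |iteratedDeriv m f x - iteratedDeriv m f y| ≤ |x - y| ^ α}

/-- Zolotarev ζ-distance between two laws on ℝ, for `s = m + α`. -/
def zetaM (m : ℕ) (α : ℝ) (P Q : Measure ℝ) : ℝ :=
  sSup { d | ∃ f ∈ zClass m α, d = |(∫ x, f x ∂P) - ∫ x, f x ∂Q| }

/-- Zolotarev ζ-distance between two random variables. -/
def zeta {Ω₁ Ω₂ : Type*} [MeasurableSpace Ω₁] [MeasurableSpace Ω₂]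
    (m : ℕ) (α : ℝ) (P₁ : Measure Ω₁) (P₂ : Measure Ω₂)
    (X : Ω₁ → ℝ) (Y : Ω₂ → ℝ) : ℝ :=
  zetaM m α (P₁.map X) (P₂.map Y)

end

lemma taylor_rem_nonneg (α : ℝ) (hα : 0 < α) :
    ∀ m : ℕ, ∀ g : ℝ → ℝ, ContDiff ℝ m g →
    (∀ t, |iteratedDeriv m g t - iteratedDeriv m g 0| ≤ |t| ^ α) →
    ∀ x : ℝ, 0 ≤ x →
    |g x - ∑ k ∈ Finset.range (m + 1), iteratedDeriv k g 0 * x ^ k / (Nat.factorial k)| ≤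
      Real.Gamma (1 + α) / Real.Gamma (m + 1 + α) * x ^ ((m : ℝ) + α) := by
  intro m
  induction m with
  | zero =>
    intro g _ hhol x hx
    simp only [Finset.range_one, Finset.sum_singleton, iteratedDeriv_zero, pow_zero,
      Nat.factorial_zero, Nat.cast_one, mul_one, div_one, Nat.cast_zero, zero_add]
    have h1 := hhol x
    simp only [iteratedDeriv_zero] at h1
    rw [abs_of_nonneg hx] at h1
    rw [div_self (Real.Gamma_pos_of_pos (by linarith : (0:ℝ) < 1 + α)).ne', one_mul]
    exact h1
  | succ m ih =>
    intro g hcd hhol x hx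
    have hcd' : ContDiff ℝ ((m : WithTop ℕ∞) + 1) g := by
      rw [show ((m : WithTop ℕ∞) + 1) = ((m + 1 : ℕ) : WithTop ℕ∞) by push_cast; rfl]
      exact hcd
    rw [contDiff_succ_iff_deriv] at hcd'
    obtain ⟨hgdiff, -, hcdh⟩ := hcd'
    set h : ℝ → ℝ := deriv g with hh
    have hhol' : ∀ t, |iteratedDeriv m h t - iteratedDeriv m h 0| ≤ |t| ^ α := by
      intro t
      have := hhol t
      rwa [iteratedDeriv_succ'] at this
    have IH := ih h hcdh hhol'
    set S : ℝ → ℝ := fun t => ∑ k ∈ Finset.range (m + 1),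
      iteratedDeriv k h 0 * t ^ k / (Nat.factorial k) with hS
    set F : ℝ → ℝ := fun t => g t - ∑ k ∈ Finset.range (m + 1 + 1),
      iteratedDeriv k g 0 * t ^ k / (Nat.factorial k) with hF
    have hF0 : F 0 = 0 := by
      simp only [hF]
      rw [Finset.sum_eq_single 0]
      · simp
      · intro k _ hk
        simp [zero_pow hk]
      · simp
    have hFderiv : ∀ t : ℝ, HasDerivAt F (h t - S t) t := by
      intro t
      have h1 : HasDerivAt g (h t) t := (hgdiff t).hasDerivAt
      have h3 : HasDerivAt (fun u : ℝ => ∑ k ∈ Finset.range (m + 1 + 1),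
          iteratedDeriv k g 0 * u ^ k / (Nat.factorial k))
          (∑ k ∈ Finset.range (m + 1 + 1),
            iteratedDeriv k g 0 * ((k : ℝ) * t ^ (k - 1)) / (Nat.factorial k)) t := by
        apply HasDerivAt.fun_sum
        intro k _
        exact ((hasDerivAt_pow k t).const_mul (iteratedDeriv k g 0)).div_const _
      have h2 : HasDerivAt (fun u : ℝ => ∑ k ∈ Finset.range (m + 1 + 1),
          iteratedDeriv k g 0 * u ^ k / (Nat.factorial k)) (S t) t := by
        convert h3 using 1
        rw [hS, Finset.sum_range_succ']
        rw [show (iteratedDeriv 0 g 0 * ((0:ℕ) * t ^ (0 - 1)) / ((Nat.factorial 0 : ℕ) : ℝ)) = 0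
          by push_cast; ring]
        rw [add_zero]
        apply Finset.sum_congr rfl
        intro k _
        rw [← iteratedDeriv_succ']
        rw [show ((k + 1 : ℕ) : ℝ) * t ^ (k + 1 - 1) = ((k:ℝ)+1) * t ^ k by push_cast; ring,
          Nat.factorial_succ]
        have hk1 : ((k:ℝ) + 1) ≠ 0 := by positivity
        have hkf : ((Nat.factorial k : ℕ) : ℝ) ≠ 0 := by positivity
        push_cast
        field_simp
      exact h1.sub h2
    have hScont : Continuous S := by
      apply continuous_finset_sum
      intro k _
      exact (continuous_const.mul (continuous_pow k)).div_const _
    have hcont : Continuous fun t => h t - S t := (hcdh.continuous).sub hScont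
    have hFTC : ∫ t in (0:ℝ)..x, (h t - S t) = F x := by
      rw [intervalIntegral.integral_eq_sub_of_hasDerivAt (fun t _ => hFderiv t)
        (hcont.intervalIntegrable 0 x), hF0, sub_zero]
    set C := Real.Gamma (1 + α) / Real.Gamma (m + 1 + α) with hC
    have hC0 : 0 ≤ C := le_of_lt (div_pos (Real.Gamma_pos_of_pos (by linarith))
      (Real.Gamma_pos_of_pos (by positivity)))
    have hbound : |F x| ≤ C * (x ^ ((m : ℝ) + α + 1) / ((m : ℝ) + α + 1)) := by
      rw [← hFTC]
      calc |∫ t in (0:ℝ)..x, (h t - S t)| ≤ ∫ t in (0:ℝ)..x, |h t - S t| := by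
            simpa using intervalIntegral.norm_integral_le_integral_norm (f := fun t => h t - S t)
              (a := 0) (b := x) (μ := volume) hx
        _ ≤ ∫ t in (0:ℝ)..x, C * t ^ ((m : ℝ) + α) := by
            apply intervalIntegral.integral_mono_on hx
            · exact (hcont.abs.intervalIntegrable 0 x)
            · exact (intervalIntegral.intervalIntegrable_rpow' (by linarith)).const_mul C
            · intro t ht
              have h1 := IH t ht.1
              simp only [hS]
              exact h1
        _ = C * (x ^ ((m : ℝ) + α + 1) / ((m : ℝ) + α + 1)) := by
            have hm0 : (0:ℝ) ≤ (m:ℝ) := Nat.cast_nonneg m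
            rw [intervalIntegral.integral_const_mul,
              integral_rpow (Or.inl (by linarith : (-1:ℝ) < (m:ℝ)+α)),
              Real.zero_rpow (by linarith : ((m:ℝ)+α+1) ≠ 0)]
            ring
    have key : C * (x ^ ((m : ℝ) + α + 1) / ((m : ℝ) + α + 1)) =
        Real.Gamma (1 + α) / Real.Gamma (((m+1:ℕ) : ℝ) + 1 + α) * x ^ (((m+1:ℕ):ℝ) + α) := by
      have hpos : (0:ℝ) < (m:ℝ) + 1 + α := by positivity
      have hG : Real.Gamma (((m+1:ℕ):ℝ) + 1 + α) = ((m:ℝ)+1+α) * Real.Gamma ((m:ℝ)+1+α) := by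
        push_cast
        rw [show (m:ℝ)+1+1+α = ((m:ℝ)+1+α)+1 by ring, Real.Gamma_add_one hpos.ne']
      rw [hG, hC, show (((m+1:ℕ):ℝ) + α) = ((m:ℝ)+α+1) by push_cast; ring]
      have hGpos : Real.Gamma ((m:ℝ)+1+α) ≠ 0 := (Real.Gamma_pos_of_pos hpos).ne'
      have h11 : (m:ℝ)+α+1 ≠ 0 := by positivity
      have h12 : (m:ℝ)+1+α ≠ 0 := by positivity
      field_simp
      ring
    exact hbound.trans_eq key
    

lemma taylor_rem (α : ℝ) (hα : 0 < α) (m : ℕ) (g : ℝ → ℝ) (hcd : ContDiff ℝ m g)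
    (hhol : ∀ t, |iteratedDeriv m g t - iteratedDeriv m g 0| ≤ |t| ^ α) (x : ℝ) :
    |g x - ∑ k ∈ Finset.range (m + 1), iteratedDeriv k g 0 * x ^ k / (Nat.factorial k)| ≤
      Real.Gamma (1 + α) / Real.Gamma (m + 1 + α) * |x| ^ ((m : ℝ) + α) := by
  rcases le_or_gt 0 x with hx | hx
  · rw [abs_of_nonneg hx]
    exact taylor_rem_nonneg α hα m g hcd hhol x hx
  · have hgn : ContDiff ℝ m (fun t => g (-t)) := hcd.comp contDiff_neg
    have hholn : ∀ t, |iteratedDeriv m (fun u => g (-u)) t -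
        iteratedDeriv m (fun u => g (-u)) 0| ≤ |t| ^ α := by
      intro t
      rw [iteratedDeriv_comp_neg, iteratedDeriv_comp_neg, neg_zero, smul_eq_mul, smul_eq_mul,
        ← mul_sub, abs_mul, abs_pow, abs_neg, abs_one, one_pow, one_mul]
      simpa using hhol (-t)
    have h2 := taylor_rem_nonneg α hα m _ hgn hholn (-x) (by linarith)
    simp only [neg_neg] at h2
    rw [abs_of_neg hx]
    have heq : ∑ k ∈ Finset.range (m+1),
        iteratedDeriv k (fun u => g (-u)) 0 * (-x)^k / (Nat.factorial k)
        = ∑ k ∈ Finset.range (m+1), iteratedDeriv k g 0 * x^k / (Nat.factorial k) := by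
      apply Finset.sum_congr rfl
      intro k _
      rw [iteratedDeriv_comp_neg, neg_zero, smul_eq_mul]
      have : ((-1:ℝ)^k * iteratedDeriv k g 0) * (-x)^k = iteratedDeriv k g 0 * x^k := by
        rw [mul_comm ((-1:ℝ)^k) _, mul_assoc, ← mul_pow]
        norm_num
      rw [this]
    rw [heq] at h2
    exact h2

theorem stmt3 {Ω : Type*} [MeasurableSpace Ω] (P : Measure Ω) [IsProbabilityMeasure P]
    (m : ℕ) (α s : ℝ) (hα : 0 < α) (hα1 : α ≤ 1) (hs : s = m + α)
    (X Y : Ω → ℝ) (hXm : Measurable X) (hYm : Measurable Y)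
    (hXs : Integrable (fun ω => |X ω| ^ s) P)
    (hYs : Integrable (fun ω => |Y ω| ^ s) P)
    (hmom : ∀ k : ℕ, 1 ≤ k → k ≤ m → ∫ ω, X ω ^ k ∂P = ∫ ω, Y ω ^ k ∂P) :
    zeta m α P P X Y ≤
      Real.Gamma (1 + α) / Real.Gamma (1 + s) *
        ((∫ ω, |X ω| ^ s ∂P) + ∫ ω, |Y ω| ^ s ∂P) := by
  have hm0 : (0:ℝ) ≤ (m:ℝ) := Nat.cast_nonneg m
  have hs0 : 0 < s := by rw [hs]; linarith
  have hc0 : 0 ≤ Real.Gamma (1 + α) / Real.Gamma (1 + s) :=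
    le_of_lt (div_pos (Real.Gamma_pos_of_pos (by linarith))
      (Real.Gamma_pos_of_pos (by linarith)))
  have hIX0 : 0 ≤ ∫ ω, |X ω| ^ s ∂P :=
    integral_nonneg fun ω => Real.rpow_nonneg (abs_nonneg _) s
  have hIY0 : 0 ≤ ∫ ω, |Y ω| ^ s ∂P :=
    integral_nonneg fun ω => Real.rpow_nonneg (abs_nonneg _) s
  apply Real.sSup_le _ (mul_nonneg hc0 (add_nonneg hIX0 hIY0))
  rintro d ⟨f, hf, rfl⟩
  obtain ⟨⟨B, hB⟩, hcd, hhol⟩ := hf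
  -- Taylor remainder
  set Tf : ℝ → ℝ := fun x => ∑ k ∈ Finset.range (m + 1),
    iteratedDeriv k f 0 * x ^ k / (Nat.factorial k) with hTf
  set R : ℝ → ℝ := fun x => f x - Tf x with hR
  have hGeq : Real.Gamma ((m:ℝ) + 1 + α) = Real.Gamma (1 + s) := by
    rw [hs]; ring_nf
  have hrem : ∀ x, |R x| ≤ Real.Gamma (1 + α) / Real.Gamma (1 + s) * |x| ^ s := by
    intro x
    have h0 := taylor_rem α hα m f hcd (fun t => by simpa using hhol t 0) x
    rw [hGeq, ← hs] at h0
    simpa only [hR, hTf] using h0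
  -- integrability facts
  have hfXint : Integrable (fun ω => f (X ω)) P := by
    refine Integrable.mono' (integrable_const B)
      ((hcd.continuous.measurable.comp hXm).aestronglyMeasurable) ?_
    exact Filter.Eventually.of_forall fun ω => by simpa using hB (X ω)
  have hfYint : Integrable (fun ω => f (Y ω)) P := by
    refine Integrable.mono' (integrable_const B)
      ((hcd.continuous.measurable.comp hYm).aestronglyMeasurable) ?_
    exact Filter.Eventually.of_forall fun ω => by simpa using hB (Y ω)
  have hmono : ∀ (Z : Ω → ℝ), Measurable Z → Integrable (fun ω => |Z ω| ^ s) P →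
      ∀ k : ℕ, k ≤ m → Integrable (fun ω => Z ω ^ k) P := by
    intro Z hZm hZs k hk
    refine Integrable.mono' ((integrable_const 1).add hZs)
      ((hZm.pow_const k).aestronglyMeasurable) ?_
    refine Filter.Eventually.of_forall fun ω => ?_
    simp only [Pi.add_apply]
    rw [Real.norm_eq_abs, abs_pow]
    rcases le_or_gt (|Z ω|) 1 with h1 | h1
    · have : |Z ω| ^ k ≤ 1 := pow_le_one₀ (abs_nonneg _) h1
      have h2 : 0 ≤ |Z ω| ^ s := Real.rpow_nonneg (abs_nonneg _) s
      linarith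
    · have h2 : |Z ω| ^ k = |Z ω| ^ (k:ℝ) := (Real.rpow_natCast _ k).symm
      have h3 : |Z ω| ^ (k:ℝ) ≤ |Z ω| ^ s := by
        apply Real.rpow_le_rpow_of_exponent_le (le_of_lt h1)
        rw [hs]
        have : (k:ℝ) ≤ (m:ℝ) := Nat.cast_le.mpr hk
        linarith
      rw [h2]
      linarith
  have hTXint : Integrable (fun ω => Tf (X ω)) P := by
    simp only [hTf]
    apply integrable_finset_sum
    intro k hk
    exact ((hmono X hXm hXs k (Nat.lt_succ_iff.mp (Finset.mem_range.mp hk))).const_mul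
      (iteratedDeriv k f 0)).div_const _
  have hTYint : Integrable (fun ω => Tf (Y ω)) P := by
    simp only [hTf]
    apply integrable_finset_sum
    intro k hk
    exact ((hmono Y hYm hYs k (Nat.lt_succ_iff.mp (Finset.mem_range.mp hk))).const_mul
      (iteratedDeriv k f 0)).div_const _
  have hRXint : Integrable (fun ω => R (X ω)) P := hfXint.sub hTXint
  have hRYint : Integrable (fun ω => R (Y ω)) P := hfYint.sub hTYint
  -- push the map measures
  have hmapX : ∫ x, f x ∂(P.map X) = ∫ ω, f (X ω) ∂P :=
    integral_map hXm.aemeasurable hcd.continuous.aestronglyMeasurable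
  have hmapY : ∫ x, f x ∂(P.map Y) = ∫ ω, f (Y ω) ∂P :=
    integral_map hYm.aemeasurable hcd.continuous.aestronglyMeasurable
  rw [hmapX, hmapY]
  -- Taylor polynomial has equal expectations
  have hTeq : ∫ ω, Tf (X ω) ∂P = ∫ ω, Tf (Y ω) ∂P := by
    simp only [hTf]
    rw [integral_finset_sum _ (fun k hk =>
      ((hmono X hXm hXs k (Nat.lt_succ_iff.mp (Finset.mem_range.mp hk))).const_mul
        (iteratedDeriv k f 0)).div_const _),
      integral_finset_sum _ (fun k hk =>
      ((hmono Y hYm hYs k (Nat.lt_succ_iff.mp (Finset.mem_range.mp hk))).const_mul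
        (iteratedDeriv k f 0)).div_const _)]
    apply Finset.sum_congr rfl
    intro k hk
    have hkm : k ≤ m := Nat.lt_succ_iff.mp (Finset.mem_range.mp hk)
    rcases Nat.eq_zero_or_pos k with hk0 | hk0
    · subst hk0; simp
    · rw [integral_div, integral_div, integral_const_mul, integral_const_mul,
        hmom k hk0 hkm]
  -- decompose f = R + Tf
  have hdecX : ∫ ω, f (X ω) ∂P = (∫ ω, R (X ω) ∂P) + ∫ ω, Tf (X ω) ∂P := by
    rw [← integral_add hRXint hTXint]
    congr 1
    funext ω
    simp [hR]
  have hdecY : ∫ ω, f (Y ω) ∂P = (∫ ω, R (Y ω) ∂P) + ∫ ω, Tf (Y ω) ∂P := by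
    rw [← integral_add hRYint hTYint]
    congr 1
    funext ω
    simp [hR]
  rw [hdecX, hdecY, hTeq]
  have hkey : |(∫ ω, R (X ω) ∂P) - ∫ ω, R (Y ω) ∂P| ≤
      Real.Gamma (1 + α) / Real.Gamma (1 + s) *
        ((∫ ω, |X ω| ^ s ∂P) + ∫ ω, |Y ω| ^ s ∂P) := by
    have hX1 : |∫ ω, R (X ω) ∂P| ≤
        Real.Gamma (1 + α) / Real.Gamma (1 + s) * ∫ ω, |X ω| ^ s ∂P := by
      calc |∫ ω, R (X ω) ∂P| ≤ ∫ ω, |R (X ω)| ∂P := by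
              simpa using norm_integral_le_integral_norm (μ := P) fun ω => R (X ω)
        _ ≤ ∫ ω, Real.Gamma (1 + α) / Real.Gamma (1 + s) * |X ω| ^ s ∂P :=
            integral_mono hRXint.abs (hXs.const_mul _) fun ω => hrem (X ω)
        _ = _ := integral_const_mul _ _
    have hY1 : |∫ ω, R (Y ω) ∂P| ≤
        Real.Gamma (1 + α) / Real.Gamma (1 + s) * ∫ ω, |Y ω| ^ s ∂P := by
      calc |∫ ω, R (Y ω) ∂P| ≤ ∫ ω, |R (Y ω)| ∂P := by
              simpa using norm_integral_le_integral_norm (μ := P) fun ω => R (Y ω)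
        _ ≤ ∫ ω, Real.Gamma (1 + α) / Real.Gamma (1 + s) * |Y ω| ^ s ∂P :=
            integral_mono hRYint.abs (hYs.const_mul _) fun ω => hrem (Y ω)
        _ = _ := integral_const_mul _ _
    calc |(∫ ω, R (X ω) ∂P) - ∫ ω, R (Y ω) ∂P| ≤
        |∫ ω, R (X ω) ∂P| + |∫ ω, R (Y ω) ∂P| := abs_sub _ _
      _ ≤ _ := by rw [mul_add]; exact add_le_add hX1 hY1
  rw [add_sub_add_right_eq_sub]
  exact hkey
end

section
/- Let X_1, X_2, … be i.i.d. with E X_1 = a ≠ 0 and Var X_1 = σ² < ∞, and let N(λ) be Poisson with mean λ > 0, independent of the X_j. Then for 1 ≤ s ≤ 2 with s = m + α (m ∈ {0,1}, 0 < α ≤ 1), ζ_s( (1/(aλ)) Σ_{j=1}^{N(λ)} X_j , 1 ) ≤ (Γ(1+α)/Γ(1+s)) · ((a² + σ²)/(λ a²))^{s/2}. -/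
open MeasureTheory ProbabilityTheory Real Set Finset

lemma restrict_map_indep {Ω : Type*} [MeasurableSpace Ω] {P : Measure Ω} [IsProbabilityMeasure P]
    {N : Ω → ℕ} {V : Ω → ℕ → ℝ} (hV : Measurable V)
    (hindep : IndepFun N V P) (k : ℕ) :
    (P.restrict (N ⁻¹' {k})).map V = (P (N ⁻¹' {k})) • (P.map V) := by
  ext B hB
  rw [Measure.map_apply hV hB, Measure.restrict_apply (hV hB), Measure.smul_apply,
    Measure.map_apply hV hB, smul_eq_mul, Set.inter_comm]
  exact (indepFun_iff_measure_inter_preimage_eq_mul.mp hindep) {k} B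
    (measurableSet_singleton k) hB

lemma piece_integral {Ω : Type*} [MeasurableSpace Ω] {P : Measure Ω} [IsProbabilityMeasure P]
    {N : Ω → ℕ} {V : Ω → ℕ → ℝ} (hV : Measurable V)
    (hindep : IndepFun N V P) (k : ℕ) {G : (ℕ → ℝ) → ℝ} (hG : Measurable G) :
    ∫ ω in N ⁻¹' {k}, G (V ω) ∂P = (P (N ⁻¹' {k})).toReal * ∫ ω, G (V ω) ∂P := by
  rw [← integral_map hV.aemeasurable hG.aestronglyMeasurable,
    restrict_map_indep hV hindep k, integral_smul_measure,
    integral_map hV.aemeasurable hG.aestronglyMeasurable, smul_eq_mul]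

lemma piece_lintegral {Ω : Type*} [MeasurableSpace Ω] {P : Measure Ω} [IsProbabilityMeasure P]
    {N : Ω → ℕ} {V : Ω → ℕ → ℝ} (hV : Measurable V)
    (hindep : IndepFun N V P) (k : ℕ) {G : (ℕ → ℝ) → ENNReal} (hG : Measurable G) :
    ∫⁻ ω in N ⁻¹' {k}, G (V ω) ∂P = (P (N ⁻¹' {k})) * ∫⁻ ω, G (V ω) ∂P := by
  rw [← lintegral_map hG hV, restrict_map_indep hV hindep k, lintegral_smul_measure,
    lintegral_map hG hV, smul_eq_mul]

section Moments
variable {Ω : Type*} [MeasurableSpace Ω] (P : Measure Ω) [IsProbabilityMeasure P]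
    (X : ℕ → Ω → ℝ) (N : Ω → ℕ) (a σ lam : ℝ)

-- X j moments
lemma XL2 (hXmeas : ∀ j, Measurable (X j)) (hident : ∀ j, P.map (X j) = P.map (X 0))
    (hL2 : MemLp (X 0) 2 P) : ∀ j, MemLp (X j) 2 P := by
  intro j
  have h0 : MemLp (id : ℝ → ℝ) 2 (P.map (X 0)) :=
    (memLp_map_measure_iff aestronglyMeasurable_id (hXmeas 0).aemeasurable).mpr hL2
  have h1 : MemLp (id : ℝ → ℝ) 2 (P.map (X j)) := by rw [hident j]; exact h0
  exact (memLp_map_measure_iff aestronglyMeasurable_id (hXmeas j).aemeasurable).mp h1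

lemma Xmean (hXmeas : ∀ j, Measurable (X j)) (hident : ∀ j, P.map (X j) = P.map (X 0))
    (hmean : ∫ ω, X 0 ω ∂P = a) : ∀ j, ∫ ω, X j ω ∂P = a := by
  intro j
  have h : ∫ ω, X j ω ∂P = ∫ x, id x ∂(P.map (X j)) :=
    (integral_map (hXmeas j).aemeasurable aestronglyMeasurable_id).symm
  rw [h, hident j, integral_map (hXmeas 0).aemeasurable aestronglyMeasurable_id]
  exact hmean

lemma Xsq (hXmeas : ∀ j, Measurable (X j)) (hident : ∀ j, P.map (X j) = P.map (X 0))
    (hL2 : MemLp (X 0) 2 P) (hmean : ∫ ω, X 0 ω ∂P = a) (hvar : variance (X 0) P = σ ^ 2) :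
    ∀ j, ∫ ω, (X j ω) ^ 2 ∂P = σ ^ 2 + a ^ 2 := by
  intro j
  have hg : AEStronglyMeasurable (fun x : ℝ => x ^ 2) (P.map (X j)) :=
    (measurable_id.pow_const 2).aestronglyMeasurable
  have h : ∫ ω, (X j ω) ^ 2 ∂P = ∫ x, x ^ 2 ∂(P.map (X j)) :=
    (integral_map (hXmeas j).aemeasurable hg).symm
  rw [h, hident j]
  have h2 : ∫ x, (fun x : ℝ => x ^ 2) x ∂(P.map (X 0)) = ∫ ω, (X 0 ω) ^ 2 ∂P :=
    integral_map (hXmeas 0).aemeasurable ((measurable_id.pow_const 2).aestronglyMeasurable)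
  rw [h2]
  have hv := variance_eq_sub hL2
  simp only [Pi.pow_apply] at hv
  rw [hvar, hmean] at hv
  linarith

lemma Xvariance (hXmeas : ∀ j, Measurable (X j)) (hident : ∀ j, P.map (X j) = P.map (X 0))
    (hL2 : MemLp (X 0) 2 P) (hmean : ∫ ω, X 0 ω ∂P = a) (hvar : variance (X 0) P = σ ^ 2) :
    ∀ j, variance (X j) P = σ ^ 2 := by
  intro j
  have hv := variance_eq_sub (XL2 P X hXmeas hident hL2 j)
  simp only [Pi.pow_apply] at hv
  rw [hv, Xsq P X a σ hXmeas hident hL2 hmean hvar j, Xmean P X a hXmeas hident hmean j]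
  ring
end Moments

section SMoments
variable {Ω : Type*} [MeasurableSpace Ω] (P : Measure Ω) [IsProbabilityMeasure P]
    (X : ℕ → Ω → ℝ) (a σ : ℝ)
    (hXmeas : ∀ j, Measurable (X j))
    (hindep : iIndepFun X P)
    (hident : ∀ j, P.map (X j) = P.map (X 0))
    (hL2 : MemLp (X 0) 2 P)
    (hmean : ∫ ω, X 0 ω ∂P = a) (hvar : variance (X 0) P = σ ^ 2)

include hXmeas hident hL2 in
lemma SL2 : ∀ k, MemLp (fun ω => ∑ j ∈ Finset.range k, X j ω) 2 P := by
  intro k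
  have h := memLp_finset_sum' (Finset.range k) (fun j _ => XL2 P X hXmeas hident hL2 j)
  convert h using 1
  ext ω
  simp

include hXmeas hident hL2 hmean in
lemma Smean : ∀ k, ∫ ω, ∑ j ∈ Finset.range k, X j ω ∂P = k * a := by
  intro k
  rw [integral_finset_sum _ (fun j _ => (XL2 P X hXmeas hident hL2 j).integrable one_le_two)]
  simp [Xmean P X a hXmeas hident hmean, mul_comm]

include hXmeas hindep hident hL2 hmean hvar in
lemma Ssq : ∀ k, ∫ ω, (∑ j ∈ Finset.range k, X j ω) ^ 2 ∂P
    = k * σ ^ 2 + (k * a) ^ 2 := by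
  intro k
  have hSL2' := SL2 P X hXmeas hident hL2 k
  have hsum_eq : (∑ j ∈ Finset.range k, X j) = (fun ω => ∑ j ∈ Finset.range k, X j ω) := by
    ext ω; simp
  have hv : variance (fun ω => ∑ j ∈ Finset.range k, X j ω) P = k * σ ^ 2 := by
    have h := IndepFun.variance_sum (μ := P) (X := X) (s := Finset.range k)
      (fun j _ => XL2 P X hXmeas hident hL2 j)
      (fun i _ j _ hij => hindep.indepFun hij)
    rw [hsum_eq] at h
    rw [h]
    simp [Xvariance P X a σ hXmeas hident hL2 hmean hvar, mul_comm]
  have hd := variance_eq_sub hSL2'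
  simp only [Pi.pow_apply] at hd
  rw [hv, Smean P X a hXmeas hident hL2 hmean k] at hd
  linarith
end SMoments

lemma hs_exp (lam : ℝ) : HasSum (fun k : ℕ => Real.exp (-lam) * lam ^ k / k.factorial) 1 := by
  have h := NormedSpace.expSeries_div_hasSum_exp lam
  rw [← Real.exp_eq_exp_ℝ] at h
  have := h.mul_left (Real.exp (-lam))
  simpa [← Real.exp_add, mul_div_assoc] using this

lemma hs_exp_mul (lam : ℝ) :
    HasSum (fun k : ℕ => Real.exp (-lam) * lam ^ k / k.factorial * k) lam := by
  set g : ℕ → ℝ := fun k => Real.exp (-lam) * lam ^ k / k.factorial * k with hg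
  have h2 : HasSum (fun k : ℕ => g (k + 1)) lam := by
    have h := ((hs_exp lam).mul_left lam)
    rw [mul_one] at h
    refine h.congr_fun fun k => ?_
    simp only [hg, Nat.factorial_succ, Nat.cast_mul, Nat.cast_add, Nat.cast_one]
    field_simp
    ring
  have := (hasSum_nat_add_iff (f := g) 1).mp h2
  simpa [hg] using this

lemma hs_exp_mul2 (lam : ℝ) :
    HasSum (fun k : ℕ => Real.exp (-lam) * lam ^ k / k.factorial * (k * ((k:ℝ) - 1))) (lam ^ 2) := by
  set g : ℕ → ℝ := fun k => Real.exp (-lam) * lam ^ k / k.factorial * (k * ((k:ℝ) - 1)) with hg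
  have h2 : HasSum (fun k : ℕ => g (k + 2)) (lam ^ 2) := by
    have h := ((hs_exp lam).mul_left (lam ^ 2))
    rw [mul_one] at h
    refine h.congr_fun fun k => ?_
    simp only [hg, Nat.factorial_succ, Nat.cast_mul, Nat.cast_add, Nat.cast_one, Nat.cast_ofNat]
    field_simp
    ring
  have := (hasSum_nat_add_iff (f := g) 2).mp h2
  simpa [hg, Finset.sum_range_succ] using this

lemma hs_exp_sq (lam : ℝ) :
    HasSum (fun k : ℕ => Real.exp (-lam) * lam ^ k / k.factorial * (k:ℝ) ^ 2) (lam ^ 2 + lam) := by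
  have h := (hs_exp_mul2 lam).add (hs_exp_mul lam)
  refine HasSum.congr_fun h fun k => ?_
  ring

section WFacts
variable {Ω : Type*} [MeasurableSpace Ω] (P : Measure Ω) [IsProbabilityMeasure P]
    (X : ℕ → Ω → ℝ) (N : Ω → ℕ) (a σ lam : ℝ)
    (hlam : 0 < lam) (ha : a ≠ 0)
    (hXmeas : ∀ j, Measurable (X j))
    (hindep : iIndepFun X P)
    (hident : ∀ j, P.map (X j) = P.map (X 0))
    (hL2 : MemLp (X 0) 2 P)
    (hmean : ∫ ω, X 0 ω ∂P = a) (hvar : variance (X 0) P = σ ^ 2)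
    (hNmeas : Measurable N)
    (hNdist : ∀ k : ℕ, (P {ω | N ω = k}).toReal = Real.exp (-lam) * lam ^ k / k.factorial)
    (hNindep : IndepFun N (fun ω j => X j ω) P)

include hXmeas hNmeas in
lemma Wmeas : Measurable (fun ω => (1 / (a * lam)) * ∑ j ∈ Finset.range (N ω), X j ω) := by
  have hsum : Measurable (fun p : Ω × ℕ => ∑ j ∈ Finset.range p.2, X j p.1) := by
    apply measurable_from_prod_countable_left
    intro k
    exact Finset.measurable_sum (Finset.range k) (fun j _ => hXmeas j)
  exact (hsum.comp (measurable_id.prodMk hNmeas)).const_mul _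

include hlam ha hXmeas hindep hident hL2 hmean hvar hNmeas hNdist hNindep in
lemma Wfacts :
    MemLp (fun ω => (1 / (a * lam)) * ∑ j ∈ Finset.range (N ω), X j ω) 2 P ∧
    ∫ ω, (1 / (a * lam)) * ∑ j ∈ Finset.range (N ω), X j ω ∂P = 1 ∧
    ∫ ω, ((1 / (a * lam)) * ∑ j ∈ Finset.range (N ω), X j ω - 1) ^ 2 ∂P
      = (a ^ 2 + σ ^ 2) / (lam * a ^ 2) := by
  set c : ℝ := 1 / (a * lam) with hc
  set W : Ω → ℝ := fun ω => c * ∑ j ∈ Finset.range (N ω), X j ω with hW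
  set S : ℕ → Ω → ℝ := fun k ω => ∑ j ∈ Finset.range k, X j ω with hS
  set V : Ω → ℕ → ℝ := fun ω j => X j ω with hV
  set q : ℕ → ℝ := fun k => Real.exp (-lam) * lam ^ k / k.factorial with hqdef
  set A : ℕ → Set Ω := fun k => N ⁻¹' {k} with hA
  have hWmeas : Measurable W := Wmeas X N a lam hXmeas hNmeas
  have hVmeas : Measurable V := measurable_pi_lambda _ (fun j => hXmeas j)
  have hAmeas : ∀ k, MeasurableSet (A k) := fun k => hNmeas (measurableSet_singleton k)
  have hAdisj : Pairwise (Function.onFun Disjoint A) := by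
    intro i j hij
    simp only [Function.onFun, hA]
    refine Set.disjoint_left.mpr fun ω hi hj => ?_
    simp only [Set.mem_preimage, Set.mem_singleton_iff] at hi hj
    exact hij (hi ▸ hj ▸ rfl)
  have hAunion : (⋃ k, A k) = Set.univ := by
    ext ω; simp [hA]
  have hq : ∀ k, (P (A k)).toReal = q k := fun k => hNdist k
  have hqnonneg : ∀ k, 0 ≤ q k := by
    intro k
    rw [hqdef]
    positivity
  have hqofReal : ∀ k, P (A k) = ENNReal.ofReal (q k) := by
    intro k
    rw [← hq k, ENNReal.ofReal_toReal (measure_ne_top P _)]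
  have hSL2 := SL2 P X hXmeas hident hL2
  have hSsq := Ssq P X a σ hXmeas hindep hident hL2 hmean hvar
  have hSmean := Smean P X a hXmeas hident hL2 hmean
  have hcSsq : ∀ k, ∫ ω, (c * S k ω) ^ 2 ∂P = c ^ 2 * (k * σ ^ 2 + (k * a) ^ 2) := by
    intro k
    have : ∀ ω, (c * S k ω) ^ 2 = c ^ 2 * (S k ω) ^ 2 := fun ω => by ring
    simp_rw [this]
    rw [integral_const_mul, hSsq k]
  have hcS2int : ∀ k, Integrable (fun ω => (c * S k ω) ^ 2) P := by
    intro k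
    have h2 : MemLp (fun ω => c * S k ω) 2 P := (hSL2 k).const_mul c
    exact (memLp_two_iff_integrable_sq h2.aestronglyMeasurable).mp h2
  have hWeq : ∀ k, ∀ ω ∈ A k, W ω = c * S k ω := by
    intro k ω hω
    simp only [hA, Set.mem_preimage, Set.mem_singleton_iff] at hω
    simp only [hW, hS, hω]
  -- summability of the needed series
  have hserW : HasSum (fun k => q k * (c * (k * a))) 1 := by
    have h := (hs_exp_mul lam).mul_left (c * a)
    have hval : c * a * lam = 1 := by
      rw [hc]; field_simp
    rw [hval] at h
    refine h.congr_fun fun k => ?_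
    simp only [hqdef]; ring
  have hserV : HasSum (fun k => q k * (c ^ 2 * ((k : ℝ) * σ ^ 2 + (k * a) ^ 2)
      - 2 * c * (k * a) + 1)) ((a ^ 2 + σ ^ 2) / (lam * a ^ 2)) := by
    have h1 := (hs_exp_mul lam).mul_left (c ^ 2 * σ ^ 2 - 2 * c * a)
    have h2 := (hs_exp_sq lam).mul_left (c ^ 2 * a ^ 2)
    have h3 := hs_exp lam
    have h := (h1.add h2).add h3
    have hval : (c ^ 2 * σ ^ 2 - 2 * c * a) * lam + c ^ 2 * a ^ 2 * (lam ^ 2 + lam) + 1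
        = (a ^ 2 + σ ^ 2) / (lam * a ^ 2) := by
      rw [hc]
      field_simp
      ring
    rw [hval] at h
    refine h.congr_fun fun k => ?_
    simp only [hqdef]; ring
  -- decomposition of the Bochner integral
  have hdecomp : ∀ (F : ℝ → ℝ), Measurable F → Integrable (fun ω => F (W ω)) P →
      ∫ ω, F (W ω) ∂P = ∑' k, q k * ∫ ω, F (c * S k ω) ∂P := by
    intro F hF hFi
    have h1 : ∫ ω, F (W ω) ∂P = ∫ ω in ⋃ k, A k, F (W ω) ∂P := by
      rw [hAunion, setIntegral_univ]
    rw [h1, integral_iUnion hAmeas hAdisj (hFi.integrableOn)]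
    refine tsum_congr fun k => ?_
    have h2 : ∫ ω in A k, F (W ω) ∂P = ∫ ω in A k, F (c * S k ω) ∂P :=
      setIntegral_congr_fun (hAmeas k) (fun ω hω => by rw [hWeq k ω hω])
    have hG : Measurable (fun v : ℕ → ℝ => F (c * ∑ j ∈ Finset.range k, v j)) :=
      hF.comp ((Finset.measurable_sum (Finset.range k)
        (fun j _ => measurable_pi_apply j)).const_mul c)
    have h3 := piece_integral hVmeas hNindep k hG
    rw [h2]
    rw [← hq k]
    exact h3
  -- L2 bound
  have hWL2 : MemLp W 2 P := by
    rw [memLp_two_iff_integrable_sq hWmeas.aestronglyMeasurable]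
    refine ⟨(hWmeas.pow_const 2).aestronglyMeasurable, ?_⟩
    rw [hasFiniteIntegral_iff_norm]
    have hcast : ∀ ω, ENNReal.ofReal ‖W ω ^ 2‖ = ENNReal.ofReal (W ω ^ 2) := by
      intro ω; rw [Real.norm_eq_abs, abs_of_nonneg (sq_nonneg _)]
    calc ∫⁻ ω, ENNReal.ofReal ‖W ω ^ 2‖ ∂P
        = ∫⁻ ω, ENNReal.ofReal (W ω ^ 2) ∂P := by
          exact lintegral_congr fun ω => hcast ω
      _ = ∫⁻ ω in ⋃ k, A k, ENNReal.ofReal (W ω ^ 2) ∂P := by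
          rw [hAunion, Measure.restrict_univ]
      _ = ∑' k, ∫⁻ ω in A k, ENNReal.ofReal (W ω ^ 2) ∂P :=
          lintegral_iUnion hAmeas hAdisj _
      _ = ∑' k, ENNReal.ofReal (q k * (c ^ 2 * (k * σ ^ 2 + (k * a) ^ 2))) := by
          refine tsum_congr fun k => ?_
          have h2 : ∫⁻ ω in A k, ENNReal.ofReal (W ω ^ 2) ∂P
              = ∫⁻ ω in A k, ENNReal.ofReal ((c * S k ω) ^ 2) ∂P :=
            setLIntegral_congr_fun (hAmeas k)
              (fun ω hω => by rw [hWeq k ω hω])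
          have hG : Measurable (fun v : ℕ → ℝ =>
              ENNReal.ofReal ((c * ∑ j ∈ Finset.range k, v j) ^ 2)) :=
            ENNReal.measurable_ofReal.comp (((Finset.measurable_sum (Finset.range k)
              (fun j _ => measurable_pi_apply j)).const_mul c).pow_const 2)
          have h3 := piece_lintegral hVmeas hNindep k hG
          rw [h2, h3]
          have h4 : ∫⁻ ω, ENNReal.ofReal ((c * S k ω) ^ 2) ∂P
              = ENNReal.ofReal (∫ ω, (c * S k ω) ^ 2 ∂P) :=
            (ofReal_integral_eq_lintegral_ofReal (hcS2int k)
              (Filter.Eventually.of_forall fun ω => sq_nonneg _)).symm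
          rw [h4, hcSsq k, hqofReal k, ← ENNReal.ofReal_mul (hqnonneg k)]
      _ < ⊤ := by
          have hsummable : Summable (fun k : ℕ => q k * (c ^ 2 * (k * σ ^ 2 + (k * a) ^ 2))) := by
            have h1 := (hs_exp_mul lam).mul_left (c ^ 2 * σ ^ 2)
            have h2 := (hs_exp_sq lam).mul_left (c ^ 2 * a ^ 2)
            have h := h1.add h2
            refine (h.congr_fun fun k => ?_).summable
            simp only [hqdef]; ring
          rw [← ENNReal.ofReal_tsum_of_nonneg (fun k => by positivity) hsummable]
          exact ENNReal.ofReal_lt_top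
  refine ⟨hWL2, ?_, ?_⟩
  · -- mean 1
    have hWint : Integrable W P := hWL2.integrable one_le_two
    have h := hdecomp id measurable_id hWint
    simp only [id] at h
    rw [h]
    have : ∀ k, q k * ∫ ω, c * S k ω ∂P = q k * (c * (k * a)) := by
      intro k
      rw [integral_const_mul, hSmean k]
    rw [tsum_congr this]
    exact hserW.tsum_eq
  · -- second moment
    have hWint : Integrable W P := hWL2.integrable one_le_two
    have hW1L2 : MemLp (fun ω => W ω - 1) 2 P := hWL2.sub (memLp_const 1)
    have hW2int : Integrable (fun ω => (W ω - 1) ^ 2) P :=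
      (memLp_two_iff_integrable_sq hW1L2.aestronglyMeasurable).mp hW1L2
    have hF : Measurable (fun w : ℝ => (w - 1) ^ 2) :=
      (measurable_id.sub_const 1).pow_const 2
    have h := hdecomp (fun w => (w - 1) ^ 2) hF hW2int
    rw [h]
    have hpieces : ∀ k, q k * ∫ ω, (c * S k ω - 1) ^ 2 ∂P
        = q k * (c ^ 2 * ((k : ℝ) * σ ^ 2 + (k * a) ^ 2) - 2 * c * (k * a) + 1) := by
      intro k
      congr 1
      have hexp : ∀ ω, (c * S k ω - 1) ^ 2 = (c * S k ω) ^ 2 - 2 * c * S k ω + 1 := by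
        intro ω; ring
      simp_rw [hexp]
      have hsint : Integrable (fun ω => 2 * c * S k ω) P :=
        ((hSL2 k).integrable one_le_two).const_mul (2 * c)
      rw [integral_add (f := fun ω => (c * S k ω) ^ 2 - 2 * c * S k ω) (g := fun _ => (1 : ℝ))
        ((hcS2int k).sub hsint) (integrable_const 1),
        integral_sub (hcS2int k) hsint, integral_const_mul, hcSsq k, hSmean k]
      simp [mul_assoc]
    rw [tsum_congr hpieces]
    exact hserV.tsum_eq
end WFacts

open intervalIntegral in
lemma rpow_cont (α : ℝ) (hα : 0 ≤ α) : Continuous fun x : ℝ => |x - 1| ^ α := by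
  have h1 : Continuous fun x : ℝ => |x - 1| := (continuous_id.sub continuous_const).abs
  have h2 : Continuous fun y : ℝ => y ^ α :=
    continuous_iff_continuousAt.mpr fun y => Real.continuousAt_rpow_const y α (Or.inr hα)
  exact h2.comp h1

lemma taylor_bound {f : ℝ → ℝ} {α : ℝ} (hα : 0 < α) (hf : ContDiff ℝ 1 f)
    (hH : ∀ x y, |deriv f x - deriv f y| ≤ |x - y| ^ α) (w : ℝ) :
    |f w - f 1 - deriv f 1 * (w - 1)| ≤ |w - 1| ^ (1 + α) / (1 + α) := by
  have hd : Differentiable ℝ f := hf.differentiable one_ne_zero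
  have hc : Continuous (deriv f) := hf.continuous_deriv le_rfl
  have hftc : ∫ t in (1:ℝ)..w, deriv f t = f w - f 1 :=
    intervalIntegral.integral_deriv_eq_sub (fun x _ => hd x) (hc.intervalIntegrable 1 w)
  have hconst : ∫ t in (1:ℝ)..w, deriv f 1 = (w - 1) * deriv f 1 := by
    simp [intervalIntegral.integral_const, smul_eq_mul]
  have hsub : f w - f 1 - deriv f 1 * (w - 1) = ∫ t in (1:ℝ)..w, (deriv f t - deriv f 1) := by
    rw [intervalIntegral.integral_sub (hc.intervalIntegrable 1 w)
      (intervalIntegrable_const), hftc, hconst]; ring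
  rw [hsub]
  have hint1 : IntervalIntegrable (fun t => |deriv f t - deriv f 1|) MeasureTheory.volume 1 w :=
    ((hc.sub continuous_const).abs).intervalIntegrable 1 w
  have hint2 : IntervalIntegrable (fun t => |t - 1| ^ α) MeasureTheory.volume 1 w :=
    (rpow_cont α hα.le).intervalIntegrable 1 w
  rcases le_total 1 w with h1w | hw1
  · have hb := intervalIntegral.norm_integral_le_integral_norm (f := fun t => deriv f t - deriv f 1)
      (a := 1) (b := w) (μ := MeasureTheory.volume) h1w
    simp only [Real.norm_eq_abs] at hb
    refine hb.trans ?_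
    have hmono : ∫ t in (1:ℝ)..w, |deriv f t - deriv f 1| ≤ ∫ t in (1:ℝ)..w, |t - 1| ^ α :=
      intervalIntegral.integral_mono_on h1w hint1 hint2 (fun t ht => hH t 1)
    refine hmono.trans ?_
    have heq : ∫ t in (1:ℝ)..w, |t - 1| ^ α = ∫ t in (1:ℝ)..w, (t - 1) ^ α := by
      refine intervalIntegral.integral_congr fun t ht => ?_
      rw [Set.uIcc_of_le h1w] at ht
      rw [abs_of_nonneg (by linarith [ht.1])]
    rw [heq]
    have hcs : ∫ t in (1:ℝ)..w, (t - 1) ^ α = ∫ u in (0:ℝ)..(w-1), u ^ α := by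
      simpa using intervalIntegral.integral_comp_sub_right (a := 1) (b := w) (fun u => u ^ α) 1
    rw [hcs, integral_rpow (Or.inl (by linarith))]
    rw [Real.zero_rpow (by positivity), abs_of_nonneg (by linarith)]
    rw [add_comm 1 α]
    ring_nf
    exact le_refl _
  · have hsymm : |∫ t in (1:ℝ)..w, (deriv f t - deriv f 1)| =
        |∫ t in w..(1:ℝ), (deriv f t - deriv f 1)| := by
      rw [intervalIntegral.integral_symm]; rw [abs_neg]
    rw [hsymm]
    have hb := intervalIntegral.norm_integral_le_integral_norm (f := fun t => deriv f t - deriv f 1)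
      (a := w) (b := 1) (μ := MeasureTheory.volume) hw1
    simp only [Real.norm_eq_abs] at hb
    refine hb.trans ?_
    have hmono : ∫ t in w..(1:ℝ), |deriv f t - deriv f 1| ≤ ∫ t in w..(1:ℝ), |t - 1| ^ α :=
      intervalIntegral.integral_mono_on hw1 (hint1.symm) (hint2.symm) (fun t ht => hH t 1)
    refine hmono.trans ?_
    have heq : ∫ t in w..(1:ℝ), |t - 1| ^ α = ∫ t in w..(1:ℝ), (1 - t) ^ α := by
      refine intervalIntegral.integral_congr fun t ht => ?_
      rw [Set.uIcc_of_le hw1] at ht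
      rw [abs_of_nonpos (by linarith [ht.2]), neg_sub]
    rw [heq]
    have hcs : ∫ t in w..(1:ℝ), (1 - t) ^ α = ∫ u in (0:ℝ)..(1-w), u ^ α := by
      simpa using intervalIntegral.integral_comp_sub_left (a := w) (b := 1) (fun u => u ^ α) 1
    rw [hcs, integral_rpow (Or.inl (by linarith))]
    rw [Real.zero_rpow (by positivity), abs_of_nonpos (by linarith), neg_sub]
    rw [add_comm 1 α]
    ring_nf
    exact le_refl _

lemma jensen_rpow {Ω : Type*} [MeasurableSpace Ω] (P : Measure Ω) [IsProbabilityMeasure P]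
    (Z : Ω → ℝ) (p : ℝ) (hp0 : 0 < p) (hp1 : p ≤ 1)
    (hZ0 : ∀ ω, 0 ≤ Z ω) (hZi : Integrable Z P) :
    ∫ ω, Z ω ^ p ∂P ≤ (∫ ω, Z ω ∂P) ^ p := by
  set t := ∫ ω, Z ω ∂P with ht
  have ht0 : 0 ≤ t := integral_nonneg hZ0
  rcases eq_or_lt_of_le ht0 with h0 | hpos
  · have hz : Z =ᵐ[P] 0 :=
      (integral_eq_zero_iff_of_nonneg hZ0 hZi).mp h0.symm
    have : (fun ω => Z ω ^ p) =ᵐ[P] 0 := by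
      filter_upwards [hz] with ω hω
      simp only [Pi.zero_apply] at hω ⊢
      rw [hω, Real.zero_rpow (ne_of_gt hp0)]
    rw [integral_congr_ae this]
    simp only [Pi.zero_apply, integral_zero]
    rw [← h0, Real.zero_rpow (ne_of_gt hp0)]
  · have hpt : ∀ ω, Z ω ^ p ≤ t ^ p * (p * (Z ω / t) + (1 - p)) := by
      intro ω
      have hgm := Real.geom_mean_le_arith_mean2_weighted (w₁ := p) (w₂ := 1 - p)
        (p₁ := Z ω / t) (p₂ := 1) hp0.le (by linarith)
        (div_nonneg (hZ0 ω) ht0) (zero_le_one) (by ring)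
      rw [Real.one_rpow, mul_one, mul_one] at hgm
      calc Z ω ^ p = t ^ p * (Z ω / t) ^ p := by
            rw [← Real.mul_rpow ht0 (div_nonneg (hZ0 ω) ht0), mul_div_cancel₀]
            exact ne_of_gt hpos
        _ ≤ t ^ p * (p * (Z ω / t) + (1 - p)) :=
            mul_le_mul_of_nonneg_left hgm (Real.rpow_nonneg ht0 p)
    have hgint : Integrable (fun ω => t ^ p * (p * (Z ω / t) + (1 - p))) P :=
      (((hZi.div_const t).const_mul p).add (integrable_const _)).const_mul _
    have hle := integral_mono_of_nonneg
      (Filter.Eventually.of_forall fun ω => Real.rpow_nonneg (hZ0 ω) p)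
      hgint (Filter.Eventually.of_forall hpt)
    refine hle.trans ?_
    rw [integral_const_mul, integral_add ((hZi.div_const t).const_mul p) (integrable_const _),
      integral_const_mul, integral_div, ← ht]
    simp only [measure_univ, ENNReal.toReal_one, smul_eq_mul, integral_const, one_mul, probReal_univ]
    rw [div_self (ne_of_gt hpos)]
    ring_nf
    exact le_refl _

lemma sq_rpow_half (z : ℝ) (r : ℝ) : (z ^ 2) ^ (r / 2) = |z| ^ r := by
  rw [← sq_abs z]
  have h1 : |z| ^ 2 = |z| ^ ((2 : ℕ) : ℝ) := (Real.rpow_natCast _ 2).symm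
  rw [h1, ← Real.rpow_mul (abs_nonneg z)]
  congr 1
  push_cast
  ring

theorem stmt6 {Ω : Type*} [MeasurableSpace Ω] (P : Measure Ω) [IsProbabilityMeasure P]
    (X : ℕ → Ω → ℝ) (N : Ω → ℕ) (a σ lam : ℝ) (m : ℕ) (α s : ℝ)
    (hlam : 0 < lam) (hα : 0 < α) (hα1 : α ≤ 1) (hs : s = m + α)
    (hs1 : 1 ≤ s) (hs2 : s ≤ 2)
    (hXmeas : ∀ j, Measurable (X j))
    (hindep : iIndepFun X P)
    (hident : ∀ j, P.map (X j) = P.map (X 0))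
    (hL2 : MemLp (X 0) 2 P)
    (hmean : ∫ ω, X 0 ω ∂P = a) (ha : a ≠ 0) (hvar : variance (X 0) P = σ ^ 2)
    (hNmeas : Measurable N)
    (hNdist : ∀ k : ℕ, (P {ω | N ω = k}).toReal = Real.exp (-lam) * lam ^ k / k.factorial)
    (hNindep : IndepFun N (fun ω j => X j ω) P) :
    zeta m α P P (fun ω => (1 / (a * lam)) * ∑ j ∈ Finset.range (N ω), X j ω)
        (fun _ => (1 : ℝ)) ≤
      Real.Gamma (1 + α) / Real.Gamma (1 + s) *
        ((a ^ 2 + σ ^ 2) / (lam * a ^ 2)) ^ (s / 2) := by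
  set W : Ω → ℝ := fun ω => (1 / (a * lam)) * ∑ j ∈ Finset.range (N ω), X j ω with hWdef
  set t : ℝ := (a ^ 2 + σ ^ 2) / (lam * a ^ 2) with htdef
  set K : ℝ := Real.Gamma (1 + α) / Real.Gamma (1 + s) with hKdef
  have hWmeas : Measurable W := Wmeas X N a lam hXmeas hNmeas
  obtain ⟨hWL2, hW1, hWvar⟩ := Wfacts P X N a σ lam hlam ha hXmeas hindep hident hL2
    hmean hvar hNmeas hNdist hNindep
  have hWL2' : MemLp W 2 P := hWL2
  have hW1' : ∫ ω, W ω ∂P = 1 := hW1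
  have hWint : Integrable W P := hWL2'.integrable one_le_two
  have hW1L2 : MemLp (fun ω => W ω - 1) 2 P := hWL2.sub (memLp_const 1)
  have hW2int : Integrable (fun ω => (W ω - 1) ^ 2) P :=
    (memLp_two_iff_integrable_sq hW1L2.aestronglyMeasurable).mp hW1L2
  have ht0 : 0 ≤ t := by
    rw [htdef]
    have h1 : 0 ≤ a ^ 2 + σ ^ 2 := by positivity
    have h2 : 0 < lam * a ^ 2 := by positivity
    positivity
  have hK0 : 0 < K := by
    rw [hKdef]
    apply div_pos (Real.Gamma_pos_of_pos (by linarith)) (Real.Gamma_pos_of_pos (by linarith))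
  have hRHS0 : 0 ≤ K * t ^ (s / 2) := mul_nonneg hK0.le (Real.rpow_nonneg ht0 _)
  -- m is 0 or 1
  have hm1 : m = 0 ∨ m = 1 := by
    have : (m : ℝ) < 2 := by
      have := hs2; rw [hs] at this; linarith
    have hm2 : m < 2 := by exact_mod_cast this
    omega
  -- the expected value of |W-1|^s type quantity
  have hWvar' : ∫ ω, (W ω - 1) ^ 2 ∂P = t := hWvar
  have hjensen : ∫ ω, ((W ω - 1) ^ 2) ^ (s / 2) ∂P ≤ t ^ (s / 2) := by
    rw [← hWvar']
    exact jensen_rpow P (fun ω => (W ω - 1) ^ 2) (s / 2) (by linarith) (by linarith)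
      (fun ω => sq_nonneg _) hW2int
  have hZpmeas : Measurable (fun ω => ((W ω - 1) ^ 2) ^ (s / 2)) := by
    have hrc : Continuous fun u : ℝ => u ^ (s / 2) :=
      continuous_iff_continuousAt.mpr fun u => Real.continuousAt_rpow_const u _ (Or.inr (by linarith))
    exact hrc.measurable.comp ((hWmeas.sub_const 1).pow_const 2)
  have hZpint : Integrable (fun ω => ((W ω - 1) ^ 2) ^ (s / 2)) P := by
    refine Integrable.mono' ((integrable_const 1).add hW2int) hZpmeas.aestronglyMeasurable ?_
    refine Filter.Eventually.of_forall fun ω => ?_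
    rw [Real.norm_eq_abs, abs_of_nonneg (Real.rpow_nonneg (sq_nonneg _) _)]
    simp only [Pi.add_apply]
    set u := (W ω - 1) ^ 2 with hu
    have hu0 : 0 ≤ u := sq_nonneg _
    rcases le_total u 1 with h | h
    · have := Real.rpow_le_one hu0 h (by linarith : (0:ℝ) ≤ s / 2)
      linarith
    · have h2 := Real.rpow_le_rpow_of_exponent_le h (by linarith : s / 2 ≤ 1)
      rw [Real.rpow_one] at h2
      linarith
  -- unfold zeta and bound the sup
  rw [zeta, zetaM]
  apply Real.sSup_le _ hRHS0
  rintro d ⟨f, ⟨⟨C, hC⟩, hsmooth, hHold⟩, rfl⟩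
  have hfc : Continuous f := hsmooth.continuous
  have hmap1 : ∫ x, f x ∂(P.map W) = ∫ ω, f (W ω) ∂P :=
    integral_map hWmeas.aemeasurable hfc.aestronglyMeasurable
  have hmap2 : ∫ x, f x ∂(P.map (fun _ => (1 : ℝ))) = f 1 := by
    rw [Measure.map_const, measure_univ, one_smul, integral_dirac]
  rw [hmap1, hmap2]
  -- integrability of f ∘ W
  have hfWint : Integrable (fun ω => f (W ω)) P := by
    refine Integrable.mono' (integrable_const C) (hfc.measurable.comp hWmeas).aestronglyMeasurable ?_
    exact Filter.Eventually.of_forall fun ω => by rw [Real.norm_eq_abs]; exact hC (W ω)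
  -- set up the linear correction D
  obtain ⟨D, hpw⟩ : ∃ D : ℝ, ∀ w, |f w - f 1 - D * (w - 1)| ≤ K * ((w - 1) ^ 2) ^ (s / 2) := by
    rcases hm1 with hm | hm
    · -- m = 0, then α = 1, s = 1
      have hα' : α = 1 := le_antisymm hα1 (by rw [hs, hm] at hs1; simpa using hs1)
      have hs' : s = 1 := by rw [hs, hm, hα']; norm_num
      refine ⟨0, fun w => ?_⟩
      have h1 := hHold w 1
      rw [hm, iteratedDeriv_zero] at h1
      have hK1 : K = 1 := by
        rw [hKdef, hα', hs']
        norm_num [Real.Gamma_two]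
      rw [hK1, one_mul, zero_mul, sub_zero, sq_rpow_half, hs', Real.rpow_one]
      rw [hα', Real.rpow_one] at h1
      exact h1
    · -- m = 1, s = 1 + α
      have hsα : s = 1 + α := by rw [hs, hm]; norm_num
      have hsm : ContDiff ℝ 1 f := by rw [hm] at hsmooth; exact_mod_cast hsmooth
      have hH' : ∀ x y, |deriv f x - deriv f y| ≤ |x - y| ^ α := by
        intro x y
        have := hHold x y
        rwa [hm, iteratedDeriv_one] at this
      refine ⟨deriv f 1, fun w => ?_⟩
      have h1 := taylor_bound hα hsm hH' w
      have hK1 : K = 1 / (1 + α) := by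
        rw [hKdef, hsα]
        have h2 : (1 : ℝ) + (1 + α) = (1 + α) + 1 := by ring
        rw [h2, Real.Gamma_add_one (by linarith : (1:ℝ) + α ≠ 0)]
        rw [mul_comm, div_mul_eq_div_div,
          div_self (ne_of_gt (Real.Gamma_pos_of_pos (by linarith : (0:ℝ) < 1 + α)))]
      rw [hK1, sq_rpow_half]
      have heq : (1 / (1 + α)) * |w - 1| ^ s = |w - 1| ^ (1 + α) / (1 + α) := by
        rw [hsα, one_div_mul_eq_div]
      rw [heq]
      exact h1
  -- main chain
  have hcorr : ∫ ω, (f (W ω) - (f 1 + D * (W ω - 1))) ∂P = ∫ ω, f (W ω) ∂P - f 1 := by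
    have e1 : Integrable (fun ω => D * (W ω - 1)) P :=
      (hWint.sub (integrable_const 1)).const_mul D
    have hlin : Integrable (fun ω => f 1 + D * (W ω - 1)) P :=
      (integrable_const (f 1)).add e1
    rw [integral_sub hfWint hlin]
    rw [integral_add (integrable_const (f 1)) e1]
    rw [integral_const, integral_const_mul,
      integral_sub hWint (integrable_const 1)]
    simp [hW1']
  have habs : |∫ ω, f (W ω) ∂P - f 1| ≤ K * ∫ ω, ((W ω - 1) ^ 2) ^ (s / 2) ∂P := by
    rw [← hcorr]
    have h1 : |∫ ω, (f (W ω) - (f 1 + D * (W ω - 1))) ∂P|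
        ≤ ∫ ω, |f (W ω) - (f 1 + D * (W ω - 1))| ∂P := by
      have := norm_integral_le_integral_norm (f := fun ω => f (W ω) - (f 1 + D * (W ω - 1))) (μ := P)
      simpa [Real.norm_eq_abs] using this
    refine h1.trans ?_
    have h2 : ∫ ω, |f (W ω) - (f 1 + D * (W ω - 1))| ∂P
        ≤ ∫ ω, K * ((W ω - 1) ^ 2) ^ (s / 2) ∂P := by
      refine integral_mono_of_nonneg (Filter.Eventually.of_forall fun ω => abs_nonneg _)
        (hZpint.const_mul K) (Filter.Eventually.of_forall fun ω => ?_)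
      have := hpw (W ω)
      calc |f (W ω) - (f 1 + D * (W ω - 1))| = |f (W ω) - f 1 - D * (W ω - 1)| := by
            rw [sub_add_eq_sub_sub]
        _ ≤ K * ((W ω - 1) ^ 2) ^ (s / 2) := hpw (W ω)
    refine h2.trans ?_
    rw [integral_const_mul]
  refine habs.trans ?_
  exact mul_le_mul_of_nonneg_left hjensen hK0.le
end
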